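/- Let d ≥ 1 and let D ⊂ ℝ^d be a nonempty bounded open set with diam D ≤ 1. Let V : (0,1] → (0,1] be nondecreasing and satisfy the lower weak scaling condition at zero with constant ã₁ > 0 and exponent δ̲_V > 0, and let ψ : [1,∞) → (0,∞) be measurable and satisfy the lower weak scaling condition at infinity with constant a̲ > 0 and exponent δ̲_ψ ∈ (0,1). Then there exists C > 0 such that for every z ∈ ∂D: ∫_D V(δ_D(x))² / ( V(|x−z|)² |x−z|^d ψ(V(|x−z|)^{-2}) ) dx ≤ C, where the integral is with respect to Lebesgue measure on D. -/

import Mathlib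

open Real MeasureTheory Metric

/-- Dyadic annulus estimate: the integral of `|x-z|^(s-d)` over the punctured unit ball
is bounded by an explicit constant independent of `z`. -/
lemma aux_dyadic {d : ℕ} {s : ℝ} (hs : 0 < s) (z : EuclideanSpace ℝ (Fin d)) :
    (∫⁻ x in closedBall z 1 \ {z},
        ENNReal.ofReal (dist x z ^ s / dist x z ^ d)) ≤
      ENNReal.ofReal ((2 : ℝ) ^ d) * (1 - ENNReal.ofReal ((2 : ℝ)⁻¹ ^ s))⁻¹ *
        volume (ball (0 : EuclideanSpace ℝ (Fin d)) 1) := by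
  set v := volume (ball (0 : EuclideanSpace ℝ (Fin d)) 1)
  set A : ℕ → Set (EuclideanSpace ℝ (Fin d)) :=
    fun n => closedBall z ((2:ℝ)⁻¹ ^ n) \ closedBall z ((2:ℝ)⁻¹ ^ (n + 1)) with hA
  have hhalf : (0:ℝ) < 2⁻¹ := by norm_num
  have hcover : closedBall z 1 \ {z} ⊆ ⋃ n, A n := by
    intro w hw
    have ht : 0 < dist w z := dist_pos.2 (by simpa using hw.2)
    have hfind : ∃ n : ℕ, (2:ℝ)⁻¹ ^ n < dist w z :=
      exists_pow_lt_of_lt_one ht (by norm_num)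
    classical
    set n₀ := Nat.find hfind with hn₀
    have hspec : (2:ℝ)⁻¹ ^ n₀ < dist w z := Nat.find_spec hfind
    have hn0 : n₀ ≠ 0 := by
      intro h
      rw [h] at hspec
      simp only [pow_zero] at hspec
      exact absurd (mem_closedBall.1 hw.1) (not_le.2 hspec)
    obtain ⟨m, hm⟩ := Nat.exists_eq_succ_of_ne_zero hn0
    have hmin : ¬ ((2:ℝ)⁻¹ ^ m < dist w z) := Nat.find_min hfind (by omega)
    refine Set.mem_iUnion.2 ⟨m, ?_, ?_⟩
    · exact mem_closedBall.2 (not_lt.1 hmin)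
    · intro hmem
      have := mem_closedBall.1 hmem
      rw [hm] at hspec
      exact absurd this (not_le.2 hspec)
  have hterm : ∀ n : ℕ,
      (∫⁻ x in A n, ENNReal.ofReal (dist x z ^ s / dist x z ^ d)) ≤
        ENNReal.ofReal ((2:ℝ) ^ d * ((2:ℝ)⁻¹ ^ s) ^ n) * v := by
    intro n
    have hrn : (0:ℝ) < (2:ℝ)⁻¹ ^ (n + 1) := by positivity
    have hbd : ∀ x ∈ A n,
        ENNReal.ofReal (dist x z ^ s / dist x z ^ d) ≤
          ENNReal.ofReal (((2:ℝ)⁻¹ ^ n) ^ s / ((2:ℝ)⁻¹ ^ (n + 1)) ^ d) := by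
      intro x hx
      have h1 : dist x z ≤ (2:ℝ)⁻¹ ^ n := mem_closedBall.1 hx.1
      have h2 : (2:ℝ)⁻¹ ^ (n + 1) < dist x z := not_le.1 (fun h => hx.2 (mem_closedBall.2 h))
      apply ENNReal.ofReal_le_ofReal
      apply div_le_div₀ (by positivity)
      · exact Real.rpow_le_rpow dist_nonneg h1 hs.le
      · positivity
      · exact pow_le_pow_left₀ hrn.le h2.le d
    calc (∫⁻ x in A n, ENNReal.ofReal (dist x z ^ s / dist x z ^ d))
        ≤ ∫⁻ _ in A n, ENNReal.ofReal (((2:ℝ)⁻¹ ^ n) ^ s / ((2:ℝ)⁻¹ ^ (n + 1)) ^ d) :=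
          setLIntegral_mono measurable_const hbd
      _ = ENNReal.ofReal (((2:ℝ)⁻¹ ^ n) ^ s / ((2:ℝ)⁻¹ ^ (n + 1)) ^ d) * volume (A n) :=
          setLIntegral_const _ _
      _ ≤ ENNReal.ofReal (((2:ℝ)⁻¹ ^ n) ^ s / ((2:ℝ)⁻¹ ^ (n + 1)) ^ d) *
            volume (closedBall z ((2:ℝ)⁻¹ ^ n)) := by
          gcongr
          exact Set.diff_subset
      _ = ENNReal.ofReal (((2:ℝ)⁻¹ ^ n) ^ s / ((2:ℝ)⁻¹ ^ (n + 1)) ^ d) *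
            (ENNReal.ofReal (((2:ℝ)⁻¹ ^ n) ^ d) * v) := by
          rw [Measure.addHaar_closedBall volume z (by positivity)]
          rw [finrank_euclideanSpace_fin]
      _ = ENNReal.ofReal ((2:ℝ) ^ d * ((2:ℝ)⁻¹ ^ s) ^ n) * v := by
          rw [← mul_assoc, ← ENNReal.ofReal_mul (by positivity)]
          congr 2
          have h1 : (((2:ℝ)⁻¹ ^ n) : ℝ) ^ s = ((2:ℝ)⁻¹ ^ s) ^ n := by
            rw [← Real.rpow_natCast ((2:ℝ)⁻¹) n, ← Real.rpow_natCast ((2:ℝ)⁻¹ ^ s) n,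
              ← Real.rpow_mul (by norm_num), ← Real.rpow_mul (by norm_num), mul_comm]
          rw [h1, pow_succ, mul_pow]
          have h2 : ((2:ℝ)⁻¹ ^ n) ^ d ≠ 0 := by positivity
          field_simp
          ring_nf
          simp [← mul_pow]
  calc (∫⁻ x in closedBall z 1 \ {z}, ENNReal.ofReal (dist x z ^ s / dist x z ^ d))
      ≤ ∫⁻ x in ⋃ n, A n, ENNReal.ofReal (dist x z ^ s / dist x z ^ d) :=
        lintegral_mono_set hcover
    _ ≤ ∑' n : ℕ, ∫⁻ x in A n, ENNReal.ofReal (dist x z ^ s / dist x z ^ d) :=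
        lintegral_iUnion_le _ _
    _ ≤ ∑' n : ℕ, ENNReal.ofReal ((2:ℝ) ^ d * ((2:ℝ)⁻¹ ^ s) ^ n) * v :=
        ENNReal.tsum_le_tsum fun n => hterm n
    _ = ENNReal.ofReal ((2 : ℝ) ^ d) * (1 - ENNReal.ofReal ((2 : ℝ)⁻¹ ^ s))⁻¹ * v := by
        have : ∀ n : ℕ, ENNReal.ofReal ((2:ℝ) ^ d * ((2:ℝ)⁻¹ ^ s) ^ n) * v =
            ENNReal.ofReal ((2:ℝ) ^ d) * (ENNReal.ofReal ((2:ℝ)⁻¹ ^ s)) ^ n * v := by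
          intro n
          rw [ENNReal.ofReal_mul (by positivity),
            ENNReal.ofReal_pow (show (0:ℝ) ≤ (2:ℝ)⁻¹ ^ s by positivity)]
        simp_rw [this]
        rw [ENNReal.tsum_mul_right, ENNReal.tsum_mul_left, ENNReal.tsum_geometric]

/-- Integrability of the Poisson kernel profile against the weight `V(δ_D)`: for a bounded
open set `D ⊂ ℝ^d` with `diam D ≤ 1`, under lower weak scaling conditions on `ψ` and `V`,
`∫_D V(δ_D(x))² / ( V(|x−z|)² |x−z|^d ψ(V(|x−z|)⁻²) ) dx` is bounded uniformly in
`z ∈ ∂D`. -/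
theorem stmt_8 (d : ℕ) (hd : 1 ≤ d)
    (D : Set (EuclideanSpace ℝ (Fin d))) (hD : IsOpen D) (hDne : D.Nonempty)
    (hDb : Bornology.IsBounded D) (hdiam : Metric.diam D ≤ 1)
    (ψ V : ℝ → ℝ) (a δψ a₁ δV : ℝ)
    (ha : 0 < a) (hδψ : 0 < δψ) (hδψ1 : δψ < 1) (ha₁ : 0 < a₁) (hδV : 0 < δV)
    (hψmeas : Measurable ψ) (hψpos : ∀ t : ℝ, 1 ≤ t → 0 < ψ t)
    (hψscale : ∀ lam t : ℝ, 1 ≤ lam → 1 ≤ t → a * lam ^ δψ * ψ t ≤ ψ (lam * t))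
    (hVrange : ∀ t : ℝ, 0 < t → t ≤ 1 → 0 < V t ∧ V t ≤ 1)
    (hVmono : ∀ s t : ℝ, 0 < s → s ≤ t → t ≤ 1 → V s ≤ V t)
    (hVscale : ∀ s t : ℝ, 0 < s → s ≤ t → t ≤ 1 → a₁ * (t / s) ^ δV ≤ V t / V s) :
    ∃ C : ℝ, 0 < C ∧ ∀ z ∈ frontier D,
      (∫⁻ x in D, ENNReal.ofReal
          (V (infDist x Dᶜ) ^ 2 /
            (V (dist x z) ^ 2 * dist x z ^ d * ψ (1 / V (dist x z) ^ 2)))) ≤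
        ENNReal.ofReal C := by
  classical
  haveI : Nonempty (Fin d) := ⟨⟨0, hd⟩⟩
  -- basic constants
  set s : ℝ := 2 * δV * δψ with hs_def
  have hs : 0 < s := by positivity
  have hψ1 : 0 < ψ 1 := hψpos 1 le_rfl
  set K : ℝ := a * ψ 1 * a₁ ^ (2 * δψ) with hK_def
  have hK : 0 < K := by positivity
  set C₀ : ℝ := 1 / K with hC₀_def
  have hC₀ : 0 < C₀ := by positivity
  -- the uniform (in z) bound from the dyadic lemma
  set M : ENNReal := ENNReal.ofReal ((2 : ℝ) ^ d) * (1 - ENNReal.ofReal ((2 : ℝ)⁻¹ ^ s))⁻¹ *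
    volume (ball (0 : EuclideanSpace ℝ (Fin d)) 1) with hM_def
  have hq1 : ENNReal.ofReal ((2 : ℝ)⁻¹ ^ s) < 1 := by
    rw [← ENNReal.ofReal_one]
    exact ENNReal.ofReal_lt_ofReal_iff (by norm_num) |>.2
      (Real.rpow_lt_one (by norm_num) (by norm_num) hs)
  have hMne : M ≠ ⊤ := by
    apply ENNReal.mul_ne_top
    apply ENNReal.mul_ne_top ENNReal.ofReal_ne_top
    · rw [Ne, ENNReal.inv_eq_top, tsub_eq_zero_iff_le]
      exact fun h => absurd h (not_le.2 hq1)
    · exact measure_ball_lt_top.ne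
  set T : ENNReal := ENNReal.ofReal C₀ * M with hT_def
  have hTne : T ≠ ⊤ := ENNReal.mul_ne_top ENNReal.ofReal_ne_top hMne
  refine ⟨T.toReal + 1, by positivity, fun z hz => ?_⟩
  -- facts about z
  have hzD : z ∉ D := by
    intro h
    exact hz.2 (by rwa [hD.interior_eq])
  -- the complement is nonempty and closed
  have hDcne : Dᶜ.Nonempty := by
    by_contra h
    rw [Set.not_nonempty_iff_eq_empty, Set.compl_empty_iff] at h
    exact NormedSpace.unbounded_univ ℝ (EuclideanSpace ℝ (Fin d)) (h ▸ hDb)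
  -- pointwise bound
  have hpt : ∀ x ∈ D,
      ENNReal.ofReal (V (infDist x Dᶜ) ^ 2 /
          (V (dist x z) ^ 2 * dist x z ^ d * ψ (1 / V (dist x z) ^ 2))) ≤
        ENNReal.ofReal C₀ * ENNReal.ofReal (dist x z ^ s / dist x z ^ d) := by
    intro x hx
    set r : ℝ := dist x z with hr_def
    have hr0 : 0 < r := dist_pos.2 (fun h => hzD (h ▸ hx))
    have hr1 : r ≤ 1 := by
      calc r ≤ diam (closure D) :=
            dist_le_diam_of_mem hDb.closure (subset_closure hx) hz.1
        _ = diam D := diam_closure D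
        _ ≤ 1 := hdiam
    set δ : ℝ := infDist x Dᶜ with hδ_def
    have hδ0 : 0 < δ :=
      (hD.isClosed_compl.notMem_iff_infDist_pos hDcne).1 (by simpa using hx)
    have hδr : δ ≤ r := infDist_le_dist_of_mem hzD
    have hVδ := hVrange δ hδ0 (hδr.trans hr1)
    have hVr := hVrange r hr0 hr1
    have hVle : V δ ≤ V r := hVmono δ r hδ0 hδr hr1
    -- upper bound V r ≤ r^δV / a₁
    have hVup : V r ≤ r ^ δV / a₁ := by
      have h := hVscale r 1 hr0 hr1 le_rfl
      have hV1 := hVrange 1 one_pos le_rfl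
      have h2 : a₁ * (1 / r) ^ δV * V r ≤ V 1 := by
        have h' := mul_le_mul_of_nonneg_right h hVr.1.le
        rwa [div_mul_cancel₀ _ hVr.1.ne'] at h'
      have h3 : a₁ * (1 / r) ^ δV * V r ≤ 1 := h2.trans hV1.2
      have h4 : (1 / r) ^ δV = (r ^ δV)⁻¹ := by
        rw [one_div, Real.inv_rpow hr0.le]
      rw [h4] at h3
      have hrδ : (0:ℝ) < r ^ δV := Real.rpow_pos_of_pos hr0 δV
      rw [le_div_iff₀ ha₁]
      have h5 := mul_le_mul_of_nonneg_right h3 hrδ.le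
      rw [one_mul] at h5
      calc V r * a₁ = a₁ * (r ^ δV)⁻¹ * V r * r ^ δV := by
            field_simp
        _ ≤ r ^ δV := h5
    -- lower bound on ψ(1 / (V r)^2)
    set lam : ℝ := 1 / V r ^ 2 with hlam_def
    have hlam1 : 1 ≤ lam := by
      rw [hlam_def, le_div_iff₀ (pow_pos hVr.1 2), one_mul]
      calc V r ^ 2 ≤ 1 ^ 2 := pow_le_pow_left₀ hVr.1.le hVr.2 2
        _ = 1 := one_pow 2
    have hψlow : K * r ^ (-s) ≤ ψ lam := by
      have hstep := hψscale lam 1 hlam1 le_rfl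
      rw [mul_one] at hstep
      have hlamlow : a₁ ^ 2 * r ^ (-(2 * δV)) ≤ lam := by
        have hVr2 : V r ^ 2 ≤ (r ^ δV / a₁) ^ 2 :=
          pow_le_pow_left₀ hVr.1.le hVup 2
        have hne : (r ^ δV / a₁) ^ 2 > 0 := by positivity
        have : 1 / (r ^ δV / a₁) ^ 2 ≤ lam := by
          rw [hlam_def]
          exact one_div_le_one_div_of_le (pow_pos hVr.1 2) hVr2
        refine le_trans (le_of_eq ?_) this
        rw [div_pow, one_div, inv_div]
        rw [show r ^ (-(2 * δV)) = (r ^ (2 * δV))⁻¹ from Real.rpow_neg hr0.le _]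
        rw [show r ^ (2 * δV) = (r ^ δV) ^ 2 by
          rw [← Real.rpow_natCast (r ^ δV) 2, ← Real.rpow_mul hr0.le]
          norm_num [mul_comm]]
        field_simp
      have hlam_rpow : (a₁ ^ 2 * r ^ (-(2 * δV))) ^ δψ ≤ lam ^ δψ :=
        Real.rpow_le_rpow (by positivity) hlamlow hδψ.le
      have hsimp : (a₁ ^ 2 * r ^ (-(2 * δV))) ^ δψ = a₁ ^ (2 * δψ) * r ^ (-s) := by
        rw [Real.mul_rpow (by positivity) (by positivity)]
        congr 1
        · rw [← Real.rpow_natCast a₁ 2, ← Real.rpow_mul ha₁.le]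
          norm_num
        · rw [← Real.rpow_mul hr0.le]
          congr 1
          rw [hs_def]; ring
      calc K * r ^ (-s) = a * ψ 1 * (a₁ ^ (2 * δψ) * r ^ (-s)) := by
            rw [hK_def]; ring
        _ = a * (a₁ ^ 2 * r ^ (-(2 * δV))) ^ δψ * ψ 1 := by rw [hsimp]; ring
        _ ≤ a * lam ^ δψ * ψ 1 := by
            apply mul_le_mul_of_nonneg_right _ hψ1.le
            exact mul_le_mul_of_nonneg_left hlam_rpow ha.le
        _ ≤ ψ lam := hstep
    have hψlam : 0 < ψ lam := hψpos lam hlam1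
    -- main pointwise estimate
    have hmain : V δ ^ 2 / (V r ^ 2 * r ^ d * ψ lam) ≤ C₀ * (r ^ s / r ^ d) := by
      have hden' : 0 < V r ^ 2 * r ^ d * (K * r ^ (-s)) := by
        have h0 : (0:ℝ) < r ^ (-s) := Real.rpow_pos_of_pos hr0 _
        exact mul_pos (mul_pos (pow_pos hVr.1 2) (pow_pos hr0 d)) (mul_pos hK h0)
      calc V δ ^ 2 / (V r ^ 2 * r ^ d * ψ lam)
          ≤ V r ^ 2 / (V r ^ 2 * r ^ d * (K * r ^ (-s))) := by
            apply div_le_div₀ (pow_pos hVr.1 2).le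
              (pow_le_pow_left₀ hVδ.1.le hVle 2) hden'
            exact mul_le_mul_of_nonneg_left hψlow
              (mul_pos (pow_pos hVr.1 2) (pow_pos hr0 d)).le
        _ = C₀ * (r ^ s / r ^ d) := by
            rw [Real.rpow_neg hr0.le, hC₀_def]
            have h1 : V r ^ 2 ≠ 0 := (pow_pos hVr.1 2).ne'
            have h2 : (r:ℝ) ^ d ≠ 0 := by positivity
            have h3 : r ^ s ≠ 0 := (Real.rpow_pos_of_pos hr0 s).ne'
            field_simp
            ring_nf
            exact mul_inv_cancel₀ hVr.1.ne'
    calc ENNReal.ofReal (V δ ^ 2 / (V r ^ 2 * r ^ d * ψ lam))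
        ≤ ENNReal.ofReal (C₀ * (r ^ s / r ^ d)) := ENNReal.ofReal_le_ofReal hmain
      _ = ENNReal.ofReal C₀ * ENNReal.ofReal (r ^ s / r ^ d) :=
          ENNReal.ofReal_mul hC₀.le
  -- assemble
  have hDsub : D ⊆ closedBall z 1 \ {z} := by
    intro x hx
    constructor
    · apply mem_closedBall.2
      calc dist x z ≤ diam (closure D) :=
            dist_le_diam_of_mem hDb.closure (subset_closure hx) hz.1
        _ = diam D := diam_closure D
        _ ≤ 1 := hdiam
    · simp only [Set.mem_singleton_iff]
      intro h
      exact hzD (h ▸ hx)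
  calc (∫⁻ x in D, ENNReal.ofReal
          (V (infDist x Dᶜ) ^ 2 /
            (V (dist x z) ^ 2 * dist x z ^ d * ψ (1 / V (dist x z) ^ 2))))
      ≤ ∫⁻ x in D, ENNReal.ofReal C₀ * ENNReal.ofReal (dist x z ^ s / dist x z ^ d) := by
        apply lintegral_mono_ae
        exact (ae_restrict_iff' hD.measurableSet).2 (ae_of_all _ hpt)
    _ = ENNReal.ofReal C₀ * ∫⁻ x in D, ENNReal.ofReal (dist x z ^ s / dist x z ^ d) :=
        lintegral_const_mul' _ _ ENNReal.ofReal_ne_top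
    _ ≤ ENNReal.ofReal C₀ * ∫⁻ x in closedBall z 1 \ {z},
          ENNReal.ofReal (dist x z ^ s / dist x z ^ d) := by
        gcongr
    _ ≤ ENNReal.ofReal C₀ * M := by
        gcongr
        exact aux_dyadic hs z
    _ = T := hT_def.symm
    _ ≤ ENNReal.ofReal (T.toReal + 1) := by
        conv_lhs => rw [← ENNReal.ofReal_toReal hTne]
        exact ENNReal.ofReal_le_ofReal (by linarith)
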